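/- For any finite set X on the unit sphere S² with ψ(X) > 0, every vertex of the contact graph CG(X) has degree at most 5. -/

import Mathlib

open scoped RealInnerProductSpace
open scoped Classical

noncomputable section

/-- Angular (geodesic) distance on the unit sphere in `ℝ³`. -/
def gdist (x y : EuclideanSpace ℝ (Fin 3)) : ℝ := Real.arccos ⟪x, y⟫

/-- Any point on the unit circle has an angle in `[0, 2π)`. -/
lemma exists_angle (a b : ℝ) (h : a ^ 2 + b ^ 2 = 1) :
    ∃ θ : ℝ, 0 ≤ θ ∧ θ < 2 * Real.pi ∧ Real.cos θ = a ∧ Real.sin θ = b := by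
  have ha1 : -1 ≤ a := by nlinarith [sq_nonneg b, sq_nonneg (a + 1)]
  have ha2 : a ≤ 1 := by nlinarith [sq_nonneg b, sq_nonneg (a - 1)]
  have hb2 : b ^ 2 = 1 - a ^ 2 := by linarith
  have hpi := Real.pi_pos
  by_cases hb : 0 ≤ b
  · refine ⟨Real.arccos a, Real.arccos_nonneg a, ?_, Real.cos_arccos ha1 ha2, ?_⟩
    · have := Real.arccos_le_pi a; linarith
    · rw [Real.sin_arccos, ← hb2, Real.sqrt_sq_eq_abs, abs_of_nonneg hb]
  · push_neg at hb
    have ha2' : a < 1 := by nlinarith [sq_nonneg b]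
    have harc : 0 < Real.arccos a := Real.arccos_pos.2 ha2'
    refine ⟨2 * Real.pi - Real.arccos a, ?_, by linarith, ?_, ?_⟩
    · have := Real.arccos_le_pi a; linarith
    · rw [Real.cos_two_pi_sub, Real.cos_arccos ha1 ha2]
    · rw [Real.sin_two_pi_sub, Real.sin_arccos, ← hb2, Real.sqrt_sq_eq_abs,
        abs_of_neg hb, neg_neg]

/-- Among six angles in `[0, 2π)`, two distinct ones are within `π/3` of each
other around the circle. -/
lemma exists_close_pair (T : Finset ℝ) (hcard : T.card = 6)
    (hmem : ∀ x ∈ T, 0 ≤ x ∧ x < 2 * Real.pi) :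
    ∃ a ∈ T, ∃ b ∈ T, a ≠ b ∧ 1 / 2 ≤ Real.cos (a - b) := by
  have hpi := Real.pi_pos
  set f := T.orderIsoOfFin hcard with hf
  set g : Fin 6 → ℝ := fun i => (f i : ℝ) with hg
  have hgmono : StrictMono g := fun i j hij => by
    exact_mod_cast (f.lt_iff_lt.2 hij)
  have hgmem : ∀ i, g i ∈ T := fun i => (f i).2
  by_cases hgap : ∃ i j : Fin 6, i < j ∧ g j - g i ≤ Real.pi / 3
  · obtain ⟨i, j, hij, hle⟩ := hgap
    refine ⟨g j, hgmem j, g i, hgmem i, (hgmono hij).ne', ?_⟩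
    have h0 : 0 ≤ g j - g i := le_of_lt (sub_pos.2 (hgmono hij))
    have := Real.cos_le_cos_of_nonneg_of_le_pi h0 (by linarith : Real.pi / 3 ≤ Real.pi) hle
    rw [Real.cos_pi_div_three] at this
    linarith
  · push_neg at hgap
    have h01 := hgap 0 1 (by decide)
    have h12 := hgap 1 2 (by decide)
    have h23 := hgap 2 3 (by decide)
    have h34 := hgap 3 4 (by decide)
    have h45 := hgap 4 5 (by decide)
    refine ⟨g 5, hgmem 5, g 0, hgmem 0, (hgmono (by decide : (0:Fin 6) < 5)).ne', ?_⟩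
    have hlt : 5 * Real.pi / 3 < g 5 - g 0 := by linarith
    have h5 : g 5 < 2 * Real.pi := (hmem _ (hgmem 5)).2
    have h0 : 0 ≤ g 0 := (hmem _ (hgmem 0)).1
    have heq : Real.cos (g 5 - g 0) = Real.cos (2 * Real.pi - (g 5 - g 0)) := by
      rw [Real.cos_two_pi_sub]
    rw [heq]
    have hcc := Real.cos_le_cos_of_nonneg_of_le_pi
      (by linarith : (0:ℝ) ≤ 2 * Real.pi - (g 5 - g 0))
      (by linarith : Real.pi / 3 ≤ Real.pi)
      (by linarith : 2 * Real.pi - (g 5 - g 0) ≤ Real.pi / 3)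
    rw [Real.cos_pi_div_three] at hcc
    linarith

theorem contactGraph_degree_le_five
    (X : Finset (EuclideanSpace ℝ (Fin 3)))
    (hunit : ∀ p ∈ X, ‖p‖ = 1)
    (d : ℝ) (hd : 0 < d)
    (hmin : ∀ p ∈ X, ∀ q ∈ X, p ≠ q → d ≤ gdist p q)
    (v : EuclideanSpace ℝ (Fin 3)) (hv : v ∈ X) :
    (X.filter (fun y => y ≠ v ∧ gdist v y = d)).card ≤ 5 := by
  by_contra hcon
  push_neg at hcon
  set S := X.filter (fun y => y ≠ v ∧ gdist v y = d) with hSdef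
  have hS6 : 6 ≤ S.card := hcon
  have hpi := Real.pi_pos
  have hvnorm : ‖v‖ = 1 := hunit v hv
  have hvv : ⟪v, v⟫ = 1 := by
    rw [real_inner_self_eq_norm_sq, hvnorm]; norm_num
  have hSX : ∀ y ∈ S, y ∈ X := fun y hy => (Finset.mem_filter.1 hy).1
  have hSne : ∀ y ∈ S, y ≠ v := fun y hy => (Finset.mem_filter.1 hy).2.1
  have hSd : ∀ y ∈ S, gdist v y = d := fun y hy => (Finset.mem_filter.1 hy).2.2
  set c := Real.cos d with hc
  have hinner_mem : ∀ p ∈ X, ∀ q ∈ X, -1 ≤ ⟪p, q⟫ ∧ ⟪p, q⟫ ≤ 1 := by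
    intro p hp q hq
    have := abs_real_inner_le_norm p q
    rw [hunit p hp, hunit q hq, mul_one] at this
    exact abs_le.1 this
  have hvc : ∀ y ∈ S, ⟪v, y⟫ = c := by
    intro y hy
    have hm := hinner_mem v hv y (hSX y hy)
    have hgd : Real.arccos ⟪v, y⟫ = d := hSd y hy
    rw [hc, ← hgd, Real.cos_arccos hm.1 hm.2]
  obtain ⟨y₀, hy₀⟩ : S.Nonempty := Finset.card_pos.1 (by omega)
  have hdpi : d ≤ Real.pi := by
    have hgd := hSd y₀ hy₀
    rw [gdist] at hgd
    rw [← hgd]; exact Real.arccos_le_pi _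
  have hc1 : c < 1 := by
    have := Real.cos_lt_cos_of_nonneg_of_le_pi le_rfl hdpi hd
    rwa [Real.cos_zero] at this
  have hcm1 : -1 < c := by
    by_contra hle
    push_neg at hle
    have hceq : c = -1 := le_antisymm hle (Real.neg_one_le_cos d)
    obtain ⟨y₁, hy₁, y₂, hy₂, hne⟩ := Finset.one_lt_card.1 (by omega : 1 < S.card)
    have hyv : ∀ y ∈ S, y = -v := by
      intro y hy
      have h1 : ⟪v, y⟫ = -1 := by rw [hvc y hy, hceq]
      have hyy : ⟪y, y⟫ = 1 := by
        rw [real_inner_self_eq_norm_sq, hunit y (hSX y hy)]; norm_num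
      have h1' : ⟪y, v⟫ = -1 := by rw [real_inner_comm]; exact h1
      have hn0 : ‖y + v‖ ^ 2 = 0 := by
        rw [← real_inner_self_eq_norm_sq, inner_add_add_self, h1', hyy, hvv, h1]
        ring
      have hy0 : y + v = 0 := by
        rw [pow_eq_zero_iff (two_ne_zero)] at hn0
        exact norm_eq_zero.1 hn0
      exact eq_neg_of_add_eq_zero_left hy0
    exact hne (by rw [hyv y₁ hy₁, hyv y₂ hy₂])
  have hbound : ∀ y₁ ∈ S, ∀ y₂ ∈ S, y₁ ≠ y₂ → ⟪y₁, y₂⟫ ≤ c := by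
    intro y₁ h1 y₂ h2 hne
    have hm := hinner_mem y₁ (hSX y₁ h1) y₂ (hSX y₂ h2)
    have hge := hmin y₁ (hSX y₁ h1) y₂ (hSX y₂ h2) hne
    rw [gdist] at hge
    have := Real.cos_le_cos_of_nonneg_of_le_pi hd.le (Real.arccos_le_pi _) hge
    rwa [Real.cos_arccos hm.1 hm.2, ← hc] at this
  have hs2 : (0:ℝ) < 1 - c ^ 2 := by nlinarith
  set s := Real.sqrt (1 - c ^ 2) with hs
  have hspos : 0 < s := Real.sqrt_pos.2 hs2
  have hss : s * s = 1 - c ^ 2 := Real.mul_self_sqrt hs2.le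
  set w : EuclideanSpace ℝ (Fin 3) → EuclideanSpace ℝ (Fin 3) :=
    fun y => s⁻¹ • (y - c • v) with hw
  have hwv : ∀ y ∈ S, ⟪v, w y⟫ = 0 := by
    intro y hy
    rw [hw]
    simp only [inner_smul_right, inner_sub_right, hvv, hvc y hy]
    ring
  have hww : ∀ y₁ ∈ S, ∀ y₂ ∈ S, ⟪w y₁, w y₂⟫ = (1 - c ^ 2)⁻¹ * (⟪y₁, y₂⟫ - c ^ 2) := by
    intro y₁ h1 y₂ h2
    rw [hw]
    simp only [real_inner_smul_left, real_inner_smul_right, inner_sub_left, inner_sub_right,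
      hvv]
    have h1v : ⟪y₁, v⟫ = c := by rw [real_inner_comm]; exact hvc y₁ h1
    rw [h1v, hvc y₂ h2, ← hss]
    have hsne : s ≠ 0 := ne_of_gt hspos
    field_simp
    ring
  have hwone : ∀ y ∈ S, ⟪w y, w y⟫ = 1 := by
    intro y hy
    rw [hww y hy y hy]
    have hyy : ⟪y, y⟫ = 1 := by
      rw [real_inner_self_eq_norm_sq, hunit y (hSX y hy)]; norm_num
    rw [hyy]
    field_simp
  have hwlt : ∀ y₁ ∈ S, ∀ y₂ ∈ S, y₁ ≠ y₂ → ⟪w y₁, w y₂⟫ < 1 / 2 := by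
    intro y₁ h1 y₂ h2 hne
    rw [hww y₁ h1 y₂ h2]
    have hb := hbound y₁ h1 y₂ h2 hne
    have h1c : ⟪y₁, y₂⟫ - c ^ 2 ≤ c - c ^ 2 := by linarith
    have hmono : (1 - c ^ 2)⁻¹ * (⟪y₁, y₂⟫ - c ^ 2) ≤ (1 - c ^ 2)⁻¹ * (c - c ^ 2) :=
      mul_le_mul_of_nonneg_left h1c (by positivity)
    have hlt : (1 - c ^ 2)⁻¹ * (c - c ^ 2) < 1 / 2 := by
      rw [inv_mul_lt_iff₀ hs2]
      nlinarith [sq_nonneg (1 - c)]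
    linarith
  -- orthonormal basis extending v
  have hcardE : Module.finrank ℝ (EuclideanSpace ℝ (Fin 3)) = Fintype.card (Fin 3) := by
    simp [finrank_euclideanSpace]
  have horth : Orthonormal ℝ (({0} : Set (Fin 3)).restrict (fun _ => v)) := by
    constructor
    · intro i; exact hvnorm
    · intro i j hij
      exact absurd (Subtype.ext (by
        have hi : (i : Fin 3) = 0 := i.2
        have hj : (j : Fin 3) = 0 := j.2
        rw [hi, hj])) hij
  obtain ⟨B, hB⟩ := horth.exists_orthonormalBasis_extension_of_card_eq hcardE
  have hB0 : B 0 = v := hB 0 rfl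
  set A1 : EuclideanSpace ℝ (Fin 3) → ℝ := fun y => ⟪B 1, w y⟫ with hA1
  set A2 : EuclideanSpace ℝ (Fin 3) → ℝ := fun y => ⟪B 2, w y⟫ with hA2
  have hexpand : ∀ y₁ ∈ S, ∀ y₂ ∈ S,
      ⟪w y₁, w y₂⟫ = A1 y₁ * A1 y₂ + A2 y₁ * A2 y₂ := by
    intro y₁ h1 y₂ h2
    have hsum := B.sum_inner_mul_inner (w y₁) (w y₂)
    rw [Fin.sum_univ_three] at hsum
    have h0 : ⟪w y₁, B 0⟫ = 0 := by rw [hB0, real_inner_comm]; exact hwv y₁ h1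
    rw [h0, zero_mul, zero_add] at hsum
    rw [← hsum]
    simp only [hA1, hA2]
    rw [real_inner_comm (B 1) (w y₁), real_inner_comm (B 2) (w y₁)]
  have hcirc : ∀ y ∈ S, A1 y ^ 2 + A2 y ^ 2 = 1 := by
    intro y hy
    have h := hexpand y hy y hy
    rw [hwone y hy] at h
    nlinarith [h]
  set θf : EuclideanSpace ℝ (Fin 3) → ℝ := fun y =>
    if h : y ∈ S then Classical.choose (exists_angle (A1 y) (A2 y) (hcirc y h)) else 0
    with hθf
  have hθspec : ∀ y (h : y ∈ S), 0 ≤ θf y ∧ θf y < 2 * Real.pi ∧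
      Real.cos (θf y) = A1 y ∧ Real.sin (θf y) = A2 y := by
    intro y h
    simp only [hθf, dif_pos h]
    exact Classical.choose_spec (exists_angle (A1 y) (A2 y) (hcirc y h))
  have hcosdiff : ∀ y₁ ∈ S, ∀ y₂ ∈ S,
      Real.cos (θf y₁ - θf y₂) = ⟪w y₁, w y₂⟫ := by
    intro y₁ h1 y₂ h2
    rw [Real.cos_sub, (hθspec y₁ h1).2.2.1, (hθspec y₁ h1).2.2.2,
      (hθspec y₂ h2).2.2.1, (hθspec y₂ h2).2.2.2, hexpand y₁ h1 y₂ h2]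
  have hinj : Set.InjOn θf S := by
    intro y₁ h1 y₂ h2 heq
    by_contra hne
    have h := hcosdiff y₁ h1 y₂ h2
    rw [heq, sub_self, Real.cos_zero] at h
    have := hwlt y₁ h1 y₂ h2 hne
    linarith
  set T := S.image θf with hT
  have hTcard : 6 ≤ T.card := by
    rw [hT, Finset.card_image_of_injOn hinj]
    exact hS6
  obtain ⟨T', hT'sub, hT'card⟩ := Finset.exists_subset_card_eq hTcard
  have hT'mem : ∀ x ∈ T', 0 ≤ x ∧ x < 2 * Real.pi := by
    intro x hx
    obtain ⟨y, hy, rfl⟩ := Finset.mem_image.1 (hT'sub hx)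
    exact ⟨(hθspec y hy).1, (hθspec y hy).2.1⟩
  obtain ⟨a, ha, b, hb, hab, hcos⟩ := exists_close_pair T' hT'card hT'mem
  obtain ⟨y₁, hy₁, rfl⟩ := Finset.mem_image.1 (hT'sub ha)
  obtain ⟨y₂, hy₂, rfl⟩ := Finset.mem_image.1 (hT'sub hb)
  have hne : y₁ ≠ y₂ := fun h => hab (by rw [h])
  have := hwlt y₁ hy₁ y₂ hy₂ hne
  rw [hcosdiff y₁ hy₁ y₂ hy₂] at hcos
  linarith
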